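/- Fix integers 0 < n₁ ≤ n₂ ≤ … ≤ n_m and a field k of characteristic zero. Let k[v] be the polynomial ring in variables v_{ij}, (i,j) ∈ Y_n̄. For 1 ≤ a < b ≤ n_m define the left operator L_{ab} = Σ_j v_{aj} ∂/∂v_{bj} (sum over j with (b,j) ∈ Y_n̄), and for 1 ≤ a < b ≤ m define the right operator R_{ab} = Σ_i v_{ib} ∂/∂v_{ia} (sum over i with (i,a) ∈ Y_n̄); these are well-defined derivations of k[v]. Then the smallest k-subspace of k[v] containing the monomials v^A = Π_{(i,j)} v_{ij}^{A_{ij}} for all DL-dense arrays A on Y_n̄ and invariant under all operators L_{ab} and R_{ab} is the whole polynomial ring k[v]. -/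

import Mathlib

/-- Cells are pairs `(i, j)` (row `i`, column `j`, both 0-based); the Young diagram
`Y_n̄` consists of the cells with `j < m` and `i < n j`.  `IsSCorner n m Rr Rc c`
says that, after removing the rows in `Rr` and the columns in `Rc` from `Y_n̄`,
the cell `c` is a corner of the remaining (renumbered) Young diagram: it is the
lowest remaining cell of its column and the leftmost remaining cell of its row. -/
def IsSCorner (n : ℕ → ℕ) (m : ℕ) (Rr Rc : Set ℕ) (c : ℕ × ℕ) : Prop :=
  c.2 < m ∧ c.1 < n c.2 ∧ c.1 ∉ Rr ∧ c.2 ∉ Rc ∧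
  (∀ i, c.1 < i → i < n c.2 → i ∈ Rr) ∧
  (∀ j, j < c.2 → j ∉ Rc → n j ≤ c.1)

/-- An execution of the thin-hook removal process on `Y_n̄`: a list of cells, each
of which is a corner of the diagram remaining after deleting the rows and columns
of the previously recorded cells, such that at the end every cell of `Y_n̄` lies
in a removed row or in a removed column (the diagram is empty). -/
def IsExec (n : ℕ → ℕ) (m : ℕ) (l : List (ℕ × ℕ)) : Prop :=
  (∀ t (ht : t < l.length),
    IsSCorner n m {i | ∃ c ∈ l.take t, c.1 = i} {j | ∃ c ∈ l.take t, c.2 = j}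
      (l.get ⟨t, ht⟩)) ∧
  (∀ i j, j < m → i < n j → (∃ c ∈ l, c.1 = i) ∨ (∃ c ∈ l, c.2 = j))

/-- `S` is the set of staircase corners of `Y_n̄`: the recorded set of some
execution of the thin-hook removal process. -/
def IsScSet (n : ℕ → ℕ) (m : ℕ) (S : Set (ℕ × ℕ)) : Prop :=
  ∃ l : List (ℕ × ℕ), IsExec n m l ∧ S = {c | c ∈ l}

/-- The partial order on staircase corners: `(i,j) ⪯ (i',j')` iff `i ≤ i'` and
`j' ≤ j` (to increase, move down and to the left). -/
def ScLE (c c' : ℕ × ℕ) : Prop := c.1 ≤ c'.1 ∧ c'.2 ≤ c.2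

/-- A DL-dense array: an array supported on the staircase corners `S` which is
order-preserving for the staircase-corner order. -/
def DLDense (S : Set (ℕ × ℕ)) (R : ℕ × ℕ → ℕ) : Prop :=
  (∀ c, c ∉ S → R c = 0) ∧ ∀ c c', c ∈ S → c' ∈ S → ScLE c c' → R c ≤ R c'

/-- Vertical weight of an array: the sum of the entries in column `j`. -/
def vrtW (n : ℕ → ℕ) (R : ℕ × ℕ → ℕ) (j : ℕ) : ℕ := ∑ i ∈ Finset.range (n j), R (i, j)

/-- Horizontal weight of an array: the sum of the entries in row `i`. -/
def horW (m : ℕ) (R : ℕ × ℕ → ℕ) (i : ℕ) : ℕ := ∑ j ∈ Finset.range m, R (i, j)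

/-- The cells of the Young diagram `Y_n̄`, indexing the variables `v_{ij}` of the
polynomial ring `k[v]` (the symmetric algebra of the staircase matrices). -/
abbrev YCell (n : ℕ → ℕ) (m : ℕ) : Type := {c : ℕ × ℕ // c.2 < m ∧ c.1 < n c.2}

/-- The left operator `L_{ab} = Σ_j v_{aj} ∂/∂v_{bj}` (sum over the columns `j`
containing both rows `a` and `b`; when `a < b` this means `(b,j) ∈ Y_n̄`). -/
noncomputable def Lop (k : Type*) [Field k] (n : ℕ → ℕ) (m : ℕ) (a b : ℕ)
    (p : MvPolynomial (YCell n m) k) : MvPolynomial (YCell n m) k :=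
  ∑ j ∈ (Finset.range m).attach,
    if h : a < n j.1 ∧ b < n j.1 then
      MvPolynomial.X (⟨(a, j.1), ⟨Finset.mem_range.mp j.2, h.1⟩⟩ : YCell n m) *
        MvPolynomial.pderiv (⟨(b, j.1), ⟨Finset.mem_range.mp j.2, h.2⟩⟩ : YCell n m) p
    else 0

/-- The right operator `R_{ab} = Σ_i v_{ib} ∂/∂v_{ia}` (sum over the rows `i` with
`(i,a) ∈ Y_n̄`, which lie in column `b` as well whenever `a < b`). -/
noncomputable def Rop (k : Type*) [Field k] (n : ℕ → ℕ) (m : ℕ) (a b : ℕ)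
    (p : MvPolynomial (YCell n m) k) : MvPolynomial (YCell n m) k :=
  ∑ i ∈ (Finset.range (n a)).attach,
    if h : a < m ∧ b < m ∧ i.1 < n b then
      MvPolynomial.X (⟨(i.1, b), ⟨h.2.1, h.2.2⟩⟩ : YCell n m) *
        MvPolynomial.pderiv (⟨(i.1, a), ⟨h.1, Finset.mem_range.mp i.2⟩⟩ : YCell n m) p
    else 0

/-- The monomial `v^A = Π_{(i,j) ∈ Y_n̄} v_{ij}^{A_{ij}}` attached to an array `A`. -/
noncomputable def monArr (k : Type*) [Field k] (n : ℕ → ℕ) (m : ℕ)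
    (A : ℕ × ℕ → ℕ) : MvPolynomial (YCell n m) k :=
  ∏ j ∈ (Finset.range m).attach, ∏ i ∈ (Finset.range (n j.1)).attach,
    MvPolynomial.X
      (⟨(i.1, j.1), ⟨Finset.mem_range.mp j.2, Finset.mem_range.mp i.2⟩⟩ : YCell n m)
        ^ A (i.1, j.1)

namespace DLAux


open MvPolynomial Finset

variable {n : ℕ → ℕ} {m : ℕ}

/-- weighted sum of an exponent array -/
def wsum (f : ℕ × ℕ → ℕ) (u : YCell n m →₀ ℕ) : ℕ := u.sum fun c e => e * f c.1

lemma wsum_add (f : ℕ × ℕ → ℕ) (u v : YCell n m →₀ ℕ) :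
    wsum f (u + v) = wsum f u + wsum f v :=
  Finsupp.sum_add_index' (fun _ => by simp) (fun _ _ _ => add_mul _ _ _)

lemma wsum_single (f : ℕ × ℕ → ℕ) (c : YCell n m) (e : ℕ) :
    wsum f (Finsupp.single c e) = e * f c.1 :=
  Finsupp.sum_single_index (by simp)

/-- move one unit from cell `c'` to cell `c` -/
noncomputable def mv (u : YCell n m →₀ ℕ) (c' c : YCell n m) : YCell n m →₀ ℕ :=
  u - Finsupp.single c' 1 + Finsupp.single c 1

lemma sub_single_add (u : YCell n m →₀ ℕ) (c' : YCell n m) (h : u c' ≠ 0) :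
    u - Finsupp.single c' 1 + Finsupp.single c' 1 = u :=
  tsub_add_cancel_of_le (Finsupp.single_le_iff.mpr (by omega))

lemma mv_apply (u : YCell n m →₀ ℕ) (c' c x : YCell n m) :
    mv u c' c x = u x - (if c' = x then 1 else 0) + (if c = x then 1 else 0) := by
  simp [mv, Finsupp.tsub_apply, Finsupp.single_apply]

lemma mv_apply_src (u : YCell n m →₀ ℕ) {c' c : YCell n m} (hne : c ≠ c') :
    mv u c' c c' = u c' - 1 := by
  rw [mv_apply]; simp [hne]

lemma mv_apply_tgt (u : YCell n m →₀ ℕ) {c' c : YCell n m} (hne : c ≠ c') :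
    mv u c' c c = u c + 1 := by
  rw [mv_apply]; simp [Ne.symm hne]

lemma mv_apply_other (u : YCell n m →₀ ℕ) {c' c x : YCell n m} (h1 : x ≠ c') (h2 : x ≠ c) :
    mv u c' c x = u x := by
  rw [mv_apply]; simp [Ne.symm h1, Ne.symm h2]

lemma mv_mv_cancel (u : YCell n m →₀ ℕ) {c' c : YCell n m} (h : u c' ≠ 0) (hne : c ≠ c') :
    mv (mv u c' c) c c' = u := by
  ext x
  rw [mv_apply, mv_apply]
  rcases eq_or_ne x c' with rfl | h1
  · simp [hne, Ne.symm hne]; omega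
  · rcases eq_or_ne x c with rfl | h2
    · simp [hne, Ne.symm h1]
    · simp [Ne.symm h1, Ne.symm h2]

lemma wsum_mv (f : ℕ × ℕ → ℕ) (u : YCell n m →₀ ℕ) (c' c : YCell n m) (h : u c' ≠ 0) :
    wsum f (mv u c' c) + f c'.1 = wsum f u + f c.1 := by
  have h1 : wsum f (mv u c' c) = wsum f (u - Finsupp.single c' 1) + f c.1 := by
    rw [mv, wsum_add, wsum_single, one_mul]
  have h2 : wsum f u = wsum f (u - Finsupp.single c' 1) + f c'.1 := by
    conv_lhs => rw [← sub_single_add u c' h]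
    rw [wsum_add, wsum_single, one_mul]
  omega

def uDeg (u : YCell n m →₀ ℕ) : ℕ := wsum (fun _ => 1) u

def wPhi (n : ℕ → ℕ) (m : ℕ) (p : ℕ × ℕ) : ℕ := n (m-1) * p.2 + (n (m-1) - 1 - p.1)

def uPhi (n : ℕ → ℕ) (m : ℕ) (u : YCell n m →₀ ℕ) : ℕ := wsum (wPhi n m) u

def uPsi (u : YCell n m →₀ ℕ) : ℕ := wsum (fun p => p.1 * p.2) u

lemma uDeg_mv (u : YCell n m →₀ ℕ) (c' c : YCell n m) (h : u c' ≠ 0) :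
    uDeg (mv u c' c) = uDeg u := by
  have h2 : wsum (fun _ => 1) (mv u c' c) + 1 = wsum (fun _ => 1) u + 1 :=
    wsum_mv (fun _ => (1:ℕ)) u c' c h
  unfold uDeg
  omega

/-- the monomial with exponent array `u` -/
noncomputable def Mon (k : Type*) [Field k] (u : YCell n m →₀ ℕ) : MvPolynomial (YCell n m) k :=
  monomial u 1

lemma prod_monomial_one {k : Type*} [Field k] {ι : Type*} (s : Finset ι)
    (f : ι → (YCell n m →₀ ℕ)) :
    (∏ x ∈ s, (monomial (f x) (1:k))) = monomial (∑ x ∈ s, f x) 1 := by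
  induction s using Finset.cons_induction with
  | empty => simp
  | cons a s ha ih => rw [Finset.prod_cons, Finset.sum_cons, ih, monomial_mul, one_mul]


variable {k : Type*} [Field k]

lemma X_mul_monomial' (c : YCell n m) (s : YCell n m →₀ ℕ) (a : k) :
    X c * monomial s a = monomial (s + Finsupp.single c 1) a := by
  have : (X c : MvPolynomial (YCell n m) k) = monomial (Finsupp.single c 1) 1 := rfl
  rw [this, monomial_mul, one_mul, add_comm]

lemma Lop_mon (a b : ℕ) (u : YCell n m →₀ ℕ) :
    Lop k n m a b (Mon k u) =
    ∑ j ∈ (Finset.range m).attach,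
      if h : a < n j.1 ∧ b < n j.1 then
        ((u ⟨(b, j.1), ⟨Finset.mem_range.mp j.2, h.2⟩⟩ : ℕ) : k) •
          Mon k (mv u ⟨(b, j.1), ⟨Finset.mem_range.mp j.2, h.2⟩⟩
                      ⟨(a, j.1), ⟨Finset.mem_range.mp j.2, h.1⟩⟩)
      else 0 := by
  unfold Lop
  refine Finset.sum_congr rfl fun j _ => ?_
  split_ifs with h
  · rw [Mon, pderiv_monomial, X_mul_monomial', Mon, smul_monomial, mv]
    simp [mul_comm]
  · rfl

lemma Rop_mon (a b : ℕ) (u : YCell n m →₀ ℕ) :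
    Rop k n m a b (Mon k u) =
    ∑ i ∈ (Finset.range (n a)).attach,
      if h : a < m ∧ b < m ∧ i.1 < n b then
        ((u ⟨(i.1, a), ⟨h.1, Finset.mem_range.mp i.2⟩⟩ : ℕ) : k) •
          Mon k (mv u ⟨(i.1, a), ⟨h.1, Finset.mem_range.mp i.2⟩⟩
                      ⟨(i.1, b), ⟨h.2.1, h.2.2⟩⟩)
      else 0 := by
  unfold Rop
  refine Finset.sum_congr rfl fun i _ => ?_
  split_ifs with h
  · rw [Mon, pderiv_monomial, X_mul_monomial', Mon, smul_monomial, mv]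
    simp [mul_comm]
  · rfl

lemma sum_single_cells (u : YCell n m →₀ ℕ) :
    ∑ j ∈ (Finset.range m).attach, ∑ i ∈ (Finset.range (n j.1)).attach,
      Finsupp.single (⟨(i.1, j.1), ⟨Finset.mem_range.mp j.2, Finset.mem_range.mp i.2⟩⟩ : YCell n m)
        (u ⟨(i.1, j.1), ⟨Finset.mem_range.mp j.2, Finset.mem_range.mp i.2⟩⟩) = u := by
  ext c
  obtain ⟨⟨ci, cj⟩, hcj, hci⟩ := c
  rw [Finset.sum_apply']
  rw [Finset.sum_eq_single_of_mem (⟨cj, Finset.mem_range.mpr hcj⟩ : {x // x ∈ Finset.range m})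
      (Finset.mem_attach _ _)]
  · rw [Finset.sum_apply']
    rw [Finset.sum_eq_single_of_mem (⟨ci, Finset.mem_range.mpr hci⟩ : {x // x ∈ Finset.range (n cj)})
        (Finset.mem_attach _ _)]
    · simp
    · intro i _ hne
      rw [Finsupp.single_apply_eq_zero]
      intro hc
      exfalso; apply hne
      apply Subtype.ext
      have h2 := congrArg (fun c : YCell n m => c.1.1) hc
      simp at h2
      simp [h2]
  · intro j _ hne
    rw [Finset.sum_apply']
    apply Finset.sum_eq_zero
    intro i _
    rw [Finsupp.single_apply_eq_zero]
    intro hc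
    exfalso; apply hne
    apply Subtype.ext
    have h2 := congrArg (fun c : YCell n m => c.1.2) hc
    simp at h2
    simp [h2]

lemma monArr_eq (u : YCell n m →₀ ℕ)
    (A : ℕ × ℕ → ℕ)
    (hA : ∀ (i j : ℕ) (h1 : j < m) (h2 : i < n j), A (i, j) = u ⟨(i,j), ⟨h1, h2⟩⟩) :
    monArr k n m A = Mon k u := by
  unfold monArr Mon
  calc (∏ j ∈ (Finset.range m).attach, ∏ i ∈ (Finset.range (n j.1)).attach,
      (X (⟨(i.1, j.1), ⟨Finset.mem_range.mp j.2, Finset.mem_range.mp i.2⟩⟩ : YCell n m) : MvPolynomial (YCell n m) k)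
        ^ A (i.1, j.1))
      = ∏ j ∈ (Finset.range m).attach,
          monomial (∑ i ∈ (Finset.range (n j.1)).attach,
            Finsupp.single (⟨(i.1, j.1), ⟨Finset.mem_range.mp j.2, Finset.mem_range.mp i.2⟩⟩ : YCell n m)
              (u ⟨(i.1, j.1), ⟨Finset.mem_range.mp j.2, Finset.mem_range.mp i.2⟩⟩)) (1:k) := by
        refine Finset.prod_congr rfl fun j _ => ?_
        rw [← prod_monomial_one]
        refine Finset.prod_congr rfl fun i _ => ?_
        rw [X_pow_eq_monomial, hA _ _ (Finset.mem_range.mp j.2) (Finset.mem_range.mp i.2)]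
    _ = monomial u 1 := by rw [prod_monomial_one, sum_single_cells]


variable {l : List (ℕ × ℕ)}

lemma get_mem_take {t s : ℕ} (ht : t ≤ l.length) (hs : s < t) (hsl : s < l.length) :
    l.get ⟨s, hsl⟩ ∈ l.take t := by
  have hlen : s < (l.take t).length := by simp [List.length_take]; omega
  have h2 : (l.take t)[s]'hlen = l[s]'hsl := List.getElem_take
  rw [List.get_eq_getElem, ← h2]
  exact List.getElem_mem hlen

lemma mem_take_iff {t : ℕ} {x : ℕ × ℕ} (hx : x ∈ l.take t) :
    ∃ s, ∃ h : s < l.length, s < t ∧ l.get ⟨s, h⟩ = x := by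
  obtain ⟨s, hs, hget⟩ := List.mem_iff_getElem.mp hx
  have h1 : s < t := by simp [List.length_take] at hs; omega
  have h2 : s < l.length := by simp [List.length_take] at hs; omega
  exact ⟨s, h2, h1, by rw [List.get_eq_getElem, ← hget]; exact (List.getElem_take).symm⟩

lemma exec_mem_Y (hE : IsExec n m l) {c : ℕ × ℕ} (hc : c ∈ l) : c.2 < m ∧ c.1 < n c.2 := by
  obtain ⟨⟨t, ht⟩, rfl⟩ := List.mem_iff_get.mp hc
  have h := hE.1 t ht
  exact ⟨h.1, h.2.1⟩

lemma exec_ne_rc (hE : IsExec n m l) {s t : ℕ} (hs : s < l.length) (ht : t < l.length)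
    (hst : s < t) :
    (l.get ⟨s, hs⟩).1 ≠ (l.get ⟨t, ht⟩).1 ∧ (l.get ⟨s, hs⟩).2 ≠ (l.get ⟨t, ht⟩).2 := by
  have hc := hE.1 t ht
  have hmem : l.get ⟨s, hs⟩ ∈ l.take t := get_mem_take (le_of_lt ht) hst hs
  exact ⟨fun h => hc.2.2.1 ⟨_, hmem, h⟩, fun h => hc.2.2.2.1 ⟨_, hmem, h⟩⟩

lemma exec_row_inj (hE : IsExec n m l) {c c' : ℕ × ℕ} (hc : c ∈ l) (hc' : c' ∈ l)
    (h : c.1 = c'.1) : c = c' := by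
  obtain ⟨⟨s, hs⟩, rfl⟩ := List.mem_iff_get.mp hc
  obtain ⟨⟨t, ht⟩, rfl⟩ := List.mem_iff_get.mp hc'
  rcases lt_trichotomy s t with h1 | h1 | h1
  · exact absurd h (exec_ne_rc hE hs ht h1).1
  · subst h1; rfl
  · exact absurd h.symm (exec_ne_rc hE ht hs h1).1

lemma exec_col_inj (hE : IsExec n m l) {c c' : ℕ × ℕ} (hc : c ∈ l) (hc' : c' ∈ l)
    (h : c.2 = c'.2) : c = c' := by
  obtain ⟨⟨s, hs⟩, rfl⟩ := List.mem_iff_get.mp hc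
  obtain ⟨⟨t, ht⟩, rfl⟩ := List.mem_iff_get.mp hc'
  rcases lt_trichotomy s t with h1 | h1 | h1
  · exact absurd h (exec_ne_rc hE hs ht h1).2
  · subst h1; rfl
  · exact absurd h.symm (exec_ne_rc hE ht hs h1).2

/-- rows strictly below a recorded corner (within its column) are rows of corners
in strictly smaller columns -/
lemma exec_below (hE : IsExec n m l) {c : ℕ × ℕ} (hc : c ∈ l) {b : ℕ}
    (h1 : c.1 < b) (h2 : b < n c.2) :
    ∃ c' ∈ l, c'.1 = b ∧ c'.2 < c.2 := by
  obtain ⟨⟨t, ht⟩, hget⟩ := List.mem_iff_get.mp hc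
  have hcor := hE.1 t ht
  rw [hget] at hcor
  obtain ⟨x, hxtake, hx1⟩ := hcor.2.2.2.2.1 b h1 h2
  have hxl : x ∈ l := List.take_subset _ _ hxtake
  refine ⟨x, hxl, hx1, ?_⟩
  rcases lt_trichotomy x.2 c.2 with h | h | h
  · exact h
  · exfalso
    have heq := exec_col_inj hE hxl hc h
    rw [heq] at hx1
    omega
  · exfalso
    -- x is a corner in a later column; its corner condition at column c.2 gives a contradiction
    obtain ⟨s, hsl, hst, hgets⟩ := mem_take_iff hxtake
    have hcors := hE.1 s hsl
    rw [hgets] at hcors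
    have h6 := hcors.2.2.2.2.2 c.2 h
    by_cases hin : c.2 ∈ {j | ∃ cc ∈ l.take s, cc.2 = j}
    · obtain ⟨y, hy, hy2⟩ := hin
      have hyl : y ∈ l := List.take_subset _ _ hy
      have := exec_col_inj hE hyl hc hy2
      subst this
      -- y = c appears among the first s < t entries, contradicting c.2 ∉ Rc at time t
      have hytake : y ∈ l.take t := by
        obtain ⟨s', hs', hs't, hget'⟩ := mem_take_iff hy
        rw [← hget']
        exact get_mem_take (le_of_lt ht) (by omega) hs'
      exact hcor.2.2.2.1 ⟨y, hytake, rfl⟩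
    · have := h6 hin
      omega

/-- if a column has no recorded corner, each of its rows is the row of a corner in
a strictly smaller column -/
lemma exec_dead (hE : IsExec n m l) {j : ℕ} (hj : j < m) (hnone : ∀ i, (i, j) ∉ l)
    {i : ℕ} (hi : i < n j) :
    ∃ c' ∈ l, c'.1 = i ∧ c'.2 < j := by
  rcases hE.2 i j hj hi with ⟨c, hc, hc1⟩ | ⟨c, hc, hc2⟩
  · refine ⟨c, hc, hc1, ?_⟩
    have hcj : c.2 ≠ j := by
      intro h
      apply hnone c.1
      have : c = (c.1, j) := by rw [← h]
      rwa [← this]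
    rcases lt_or_gt_of_ne hcj with h | h
    · exact h
    · exfalso
      obtain ⟨⟨s, hsl⟩, hgets⟩ := List.mem_iff_get.mp hc
      have hcors := hE.1 s hsl
      rw [hgets] at hcors
      have h6 := hcors.2.2.2.2.2 j h
      by_cases hin : j ∈ {jj | ∃ cc ∈ l.take s, cc.2 = jj}
      · obtain ⟨y, hy, hy2⟩ := hin
        apply hnone y.1
        have : y = (y.1, j) := by rw [← hy2]
        rw [← this]
        exact List.take_subset _ _ hy
      · have := h6 hin
        omega
  · exfalso
    apply hnone c.1
    have : c = (c.1, j) := by rw [← hc2]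
    rwa [← this]


set_option synthInstance.maxHeartbeats 1000000 in
lemma exists_lam (M : Submodule k (MvPolynomial (YCell n m) k)) (t δ : ℕ)
    (u₀ : YCell n m →₀ ℕ) (h₀δ : uDeg u₀ = δ) (h₀φ : uPhi n m u₀ = t)
    (h₀ : Mon k u₀ ∉ M) :
    ∃ lam : (YCell n m →₀ ℕ) → k,
      (∀ u, lam u ≠ 0 → uDeg u = δ ∧ uPhi n m u = t) ∧
      lam u₀ ≠ 0 ∧
      (∀ {ι : Type} (s : Finset ι) (coef : ι → k) (tgt : ι → (YCell n m →₀ ℕ)),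
        (∀ i ∈ s, coef i = 0 ∨ (uDeg (tgt i) = δ ∧ uPhi n m (tgt i) = t)) →
        (∑ i ∈ s, coef i • Mon k (tgt i)) ∈ M →
        (∑ i ∈ s, coef i * lam (tgt i)) = 0) := by
  classical
  set P : (YCell n m →₀ ℕ) → Prop := fun u => uDeg u = δ ∧ uPhi n m u = t with hP
  set V : Submodule k (MvPolynomial (YCell n m) k) :=
    Submodule.span k {p | ∃ u, P u ∧ p = Mon k u} with hV
  have hmemV : ∀ u, P u → Mon k u ∈ V := fun u hu =>
    Submodule.subset_span ⟨u, hu, rfl⟩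
  set U : Submodule k V := Submodule.comap V.subtype M with hU
  have hx₀mem : Mon k u₀ ∈ V := hmemV u₀ ⟨h₀δ, h₀φ⟩
  set x₀ : V := ⟨Mon k u₀, hx₀mem⟩ with hx₀
  have hx₀U : x₀ ∉ U := by
    intro h
    exact h₀ (by simpa [hU, Submodule.mem_comap] using h)
  have hq : U.mkQ x₀ ≠ 0 := by
    rw [Submodule.mkQ_apply, Ne, Submodule.Quotient.mk_eq_zero]
    exact hx₀U
  obtain ⟨φ, hφ⟩ : ∃ φ : Module.Dual k (V ⧸ U), φ (U.mkQ x₀) ≠ 0 := by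
    by_contra h
    push_neg at h
    exact hq ((Module.forall_dual_apply_eq_zero_iff k _).mp h)
  refine ⟨fun u => if h : P u then φ (U.mkQ ⟨Mon k u, hmemV u h⟩) else 0, ?_, ?_, ?_⟩
  · intro u hu
    by_cases h : P u
    · exact h
    · simp [h] at hu
  · show (if h : P u₀ then φ (U.mkQ ⟨Mon k u₀, hmemV u₀ h⟩) else 0) ≠ 0
    rw [dif_pos (⟨h₀δ, h₀φ⟩ : P u₀)]
    exact hφ
  · intro ι s coef tgt hcond hM
    set F : ι → V := fun i =>
      if h : P (tgt i) then coef i • (⟨Mon k (tgt i), hmemV _ h⟩ : V) else 0 with hF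
    have hFsum : ((∑ i ∈ s, F i : V) : MvPolynomial (YCell n m) k)
        = ∑ i ∈ s, coef i • Mon k (tgt i) := by
      rw [AddSubmonoidClass.coe_finset_sum]
      refine Finset.sum_congr rfl fun i hi => ?_
      by_cases h : P (tgt i)
      · have : F i = coef i • (⟨Mon k (tgt i), hmemV _ h⟩ : V) := dif_pos h
        rw [this]
        rfl
      · have hc : coef i = 0 := (hcond i hi).resolve_right h
        have : F i = 0 := dif_neg h
        rw [this, hc, zero_smul]
        rfl
    have hmemU : (∑ i ∈ s, F i) ∈ U := by
      rw [hU, Submodule.mem_comap]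
      show ((∑ i ∈ s, F i : V) : MvPolynomial (YCell n m) k) ∈ M
      rw [hFsum]; exact hM
    have h1 : φ (U.mkQ (∑ i ∈ s, F i)) = 0 := by
      have : U.mkQ (∑ i ∈ s, F i) = 0 := by
        rw [Submodule.mkQ_apply, Submodule.Quotient.mk_eq_zero]
        exact hmemU
      rw [this, map_zero]
    rw [map_sum, map_sum] at h1
    refine Eq.trans ?_ h1
    refine Finset.sum_congr rfl fun i hi => ?_
    show coef i * (if h : P (tgt i) then φ (U.mkQ ⟨Mon k (tgt i), hmemV _ h⟩) else 0)
        = φ (U.mkQ (F i))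
    by_cases h : P (tgt i)
    · rw [dif_pos h]
      have hFi : F i = coef i • (⟨Mon k (tgt i), hmemV _ h⟩ : V) := dif_pos h
      rw [hFi, map_smul, map_smul, smul_eq_mul]
    · have hc : coef i = 0 := (hcond i hi).resolve_right h
      have hFi : F i = 0 := dif_neg h
      rw [hFi, map_zero, map_zero, hc, zero_mul]


section
variable {k : Type*} [Field k] [CharZero k] {m : ℕ} {n : ℕ → ℕ}
variable {M : Submodule k (MvPolynomial (YCell n m) k)}
variable {t δ : ℕ} {lam : (YCell n m →₀ ℕ) → k}

lemma FL (hmono : ∀ j j', j ≤ j' → j' < m → n j ≤ n j')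
    (hL : ∀ a b : ℕ, a < b → b < n (m - 1) → ∀ p ∈ M, Lop k n m a b p ∈ M)
    (IH : ∀ u : YCell n m →₀ ℕ, uPhi n m u < t → Mon k u ∈ M)
    (hsupp : ∀ u, lam u ≠ 0 → uDeg u = δ ∧ uPhi n m u = t)
    (hEQ : ∀ {ι : Type} (s : Finset ι) (coef : ι → k) (tgt : ι → (YCell n m →₀ ℕ)),
        (∀ i ∈ s, coef i = 0 ∨ (uDeg (tgt i) = δ ∧ uPhi n m (tgt i) = t)) →
        (∑ i ∈ s, coef i • Mon k (tgt i)) ∈ M →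
        (∑ i ∈ s, coef i * lam (tgt i)) = 0)
    (B : YCell n m →₀ ℕ) (hB : lam B ≠ 0)
    (hmin : ∀ u, lam u ≠ 0 → uPsi B ≤ uPsi u)
    (ca : YCell n m) (hca : B ca ≠ 0) (b : ℕ) (hab : ca.1.1 < b) (hbn : b < n ca.1.2) :
    ∃ cb : YCell n m, B cb ≠ 0 ∧ cb.1.1 = b ∧ cb.1.2 < ca.1.2 := by
  obtain ⟨⟨a, j0⟩, hjm, han⟩ := ca
  simp only at hab hbn han ⊢
  by_contra hno
  push_neg at hno
  set ca : YCell n m := ⟨(a, j0), ⟨hjm, han⟩⟩ with hcaeq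
  set cb0 : YCell n m := ⟨(b, j0), ⟨hjm, hbn⟩⟩ with hcbeq
  have hne : cb0 ≠ ca := by
    simp only [hcbeq, hcaeq, Ne, Subtype.ext_iff, Prod.ext_iff]
    omega
  have hbN : b < n (m - 1) := lt_of_lt_of_le hbn (hmono j0 (m-1) (by omega) (by omega))
  set C : YCell n m →₀ ℕ := mv B ca cb0 with hC
  have hCδ : uDeg C = δ := by
    rw [hC, uDeg_mv B _ _ hca]; exact (hsupp B hB).1
  have hw : ∀ jv : ℕ, wPhi n m (b, jv) + (b - a) = wPhi n m (a, jv) := by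
    intro jv; unfold wPhi; simp only; omega
  have hφC : uPhi n m C + (b - a) = t := by
    have h1 : uPhi n m C + wPhi n m (a, j0) = uPhi n m B + wPhi n m (b, j0) :=
      wsum_mv (wPhi n m) B ca cb0 hca
    have h2 := hw j0
    have h3 := (hsupp B hB).2
    omega
  have hCM : Mon k C ∈ M := IH C (by omega)
  have hLM : Lop k n m a b (Mon k C) ∈ M := hL a b hab hbN _ hCM
  rw [Lop_mon] at hLM
  set coef : {x // x ∈ Finset.range m} → k := fun j =>
    if h : a < n j.1 ∧ b < n j.1 then
      ((C ⟨(b, j.1), ⟨Finset.mem_range.mp j.2, h.2⟩⟩ : ℕ) : k) else 0 with hcoef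
  set tgt : {x // x ∈ Finset.range m} → (YCell n m →₀ ℕ) := fun j =>
    if h : a < n j.1 ∧ b < n j.1 then
      mv C ⟨(b, j.1), ⟨Finset.mem_range.mp j.2, h.2⟩⟩
           ⟨(a, j.1), ⟨Finset.mem_range.mp j.2, h.1⟩⟩ else 0 with htgt
  have hsum : (∑ j ∈ (Finset.range m).attach, coef j • Mon k (tgt j)) ∈ M := by
    have heq : (∑ j ∈ (Finset.range m).attach, coef j • Mon k (tgt j))
        = ∑ j ∈ (Finset.range m).attach,
          (if h : a < n j.1 ∧ b < n j.1 then
            ((C ⟨(b, j.1), ⟨Finset.mem_range.mp j.2, h.2⟩⟩ : ℕ) : k) •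
              Mon k (mv C ⟨(b, j.1), ⟨Finset.mem_range.mp j.2, h.2⟩⟩
                          ⟨(a, j.1), ⟨Finset.mem_range.mp j.2, h.1⟩⟩)
          else 0) := by
      refine Finset.sum_congr rfl fun j _ => ?_
      by_cases h : a < n j.1 ∧ b < n j.1
      · simp only [hcoef, htgt, dif_pos h]
      · simp only [hcoef, htgt, dif_neg h, zero_smul]
    rw [heq]
    exact hLM
  have hcond : ∀ j ∈ (Finset.range m).attach,
      coef j = 0 ∨ (uDeg (tgt j) = δ ∧ uPhi n m (tgt j) = t) := by
    intro j _
    by_cases h : a < n j.1 ∧ b < n j.1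
    · by_cases h0 : C ⟨(b, j.1), ⟨Finset.mem_range.mp j.2, h.2⟩⟩ = 0
      · left; simp only [hcoef, dif_pos h, h0, Nat.cast_zero]
      · right
        simp only [htgt, dif_pos h]
        constructor
        · rw [uDeg_mv _ _ _ h0, hCδ]
        · have h1 : uPhi n m (mv C ⟨(b, j.1), ⟨Finset.mem_range.mp j.2, h.2⟩⟩
                ⟨(a, j.1), ⟨Finset.mem_range.mp j.2, h.1⟩⟩) + wPhi n m (b, j.1)
              = uPhi n m C + wPhi n m (a, j.1) :=
            wsum_mv (wPhi n m) C _ _ h0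
          have h2 := hw j.1
          omega
    · left; simp only [hcoef, dif_neg h]
  have hzero := hEQ (Finset.range m).attach coef tgt hcond hsum
  have hmain : ∀ j ∈ (Finset.range m).attach,
      j ≠ (⟨j0, Finset.mem_range.mpr hjm⟩ : {x // x ∈ Finset.range m}) →
      coef j * lam (tgt j) = 0 := by
    intro j _ hjne
    by_cases h : a < n j.1 ∧ b < n j.1
    · have hjne' : j.1 ≠ j0 := fun hh => hjne (Subtype.ext hh)
      have hCval : C ⟨(b, j.1), ⟨Finset.mem_range.mp j.2, h.2⟩⟩
          = B ⟨(b, j.1), ⟨Finset.mem_range.mp j.2, h.2⟩⟩ := by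
        rw [hC]
        refine mv_apply_other B ?_ ?_
        · simp only [hcaeq, Ne, Subtype.ext_iff, Prod.ext_iff]; omega
        · simp only [hcbeq, Ne, Subtype.ext_iff, Prod.ext_iff]; omega
      by_cases h0 : B ⟨(b, j.1), ⟨Finset.mem_range.mp j.2, h.2⟩⟩ = 0
      · simp only [hcoef, dif_pos h, hCval, h0, Nat.cast_zero, zero_mul]
      · have hgt : j0 < j.1 := by
          have h5 := hno ⟨(b, j.1), ⟨Finset.mem_range.mp j.2, h.2⟩⟩ h0 rfl
          simp only at h5
          omega
        have h2 : C ⟨(b, j.1), ⟨Finset.mem_range.mp j.2, h.2⟩⟩ ≠ 0 := by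
          rw [hCval]; exact h0
        have hlam : lam (tgt j) = 0 := by
          by_contra hl
          have hge : uPsi B ≤ uPsi (mv C ⟨(b, j.1), ⟨Finset.mem_range.mp j.2, h.2⟩⟩
              ⟨(a, j.1), ⟨Finset.mem_range.mp j.2, h.1⟩⟩) := by
            have := hmin (tgt j) hl
            simpa only [htgt, dif_pos h] using this
          have h1 : uPsi C + a * j0 = uPsi B + b * j0 :=
            wsum_mv (fun p => p.1 * p.2) B ca cb0 hca
          have h3 : uPsi (mv C ⟨(b, j.1), ⟨Finset.mem_range.mp j.2, h.2⟩⟩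
                ⟨(a, j.1), ⟨Finset.mem_range.mp j.2, h.1⟩⟩) + b * j.1
              = uPsi C + a * j.1 :=
            wsum_mv (fun p => p.1 * p.2) C _ _ h2
          have h4 : a * j.1 + b * j0 < a * j0 + b * j.1 := by nlinarith
          linarith
        rw [hlam, mul_zero]
    · simp only [hcoef, dif_neg h, zero_mul]
  rw [Finset.sum_eq_single_of_mem (⟨j0, Finset.mem_range.mpr hjm⟩ :
      {x // x ∈ Finset.range m}) (Finset.mem_attach _ _) hmain] at hzero
  have hc2 : a < n j0 ∧ b < n j0 := ⟨han, hbn⟩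
  have hzero2 : ((C cb0 : ℕ) : k) * lam (mv C cb0 ca) = 0 := by
    simpa only [hcoef, htgt, dif_pos hc2] using hzero
  have hCcb : C cb0 = B cb0 + 1 := by
    rw [hC]; exact mv_apply_tgt B hne
  have htgtval : mv C cb0 ca = B := by
    rw [hC]; exact mv_mv_cancel B hca hne
  rw [hCcb, htgtval] at hzero2
  have hlamB : lam B = 0 := by
    rcases mul_eq_zero.mp hzero2 with h | h
    · exact absurd h (Nat.cast_ne_zero.mpr (Nat.succ_ne_zero (B cb0)))
    · exact h
  exact hB hlamB


end

section
variable {k : Type*} [Field k] [CharZero k] {m : ℕ} {n : ℕ → ℕ}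
variable {M : Submodule k (MvPolynomial (YCell n m) k)}
variable {t δ : ℕ} {lam : (YCell n m →₀ ℕ) → k}

lemma FR (hm : 0 < m) (hn0 : 0 < n 0)
    (hmono : ∀ j j', j ≤ j' → j' < m → n j ≤ n j')
    (hR : ∀ a b : ℕ, a < b → b < m → ∀ p ∈ M, Rop k n m a b p ∈ M)
    (IH : ∀ u : YCell n m →₀ ℕ, uPhi n m u < t → Mon k u ∈ M)
    (hsupp : ∀ u, lam u ≠ 0 → uDeg u = δ ∧ uPhi n m u = t)
    (hEQ : ∀ {ι : Type} (s : Finset ι) (coef : ι → k) (tgt : ι → (YCell n m →₀ ℕ)),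
        (∀ i ∈ s, coef i = 0 ∨ (uDeg (tgt i) = δ ∧ uPhi n m (tgt i) = t)) →
        (∑ i ∈ s, coef i • Mon k (tgt i)) ∈ M →
        (∑ i ∈ s, coef i * lam (tgt i)) = 0)
    (B : YCell n m →₀ ℕ) (hB : lam B ≠ 0)
    (hmin : ∀ u, lam u ≠ 0 → uPsi B ≤ uPsi u)
    (cb : YCell n m) (hcb : B cb ≠ 0) (a' : ℕ) (ha' : a' < cb.1.2)
    (hia : cb.1.1 < n a') :
    ∃ c' : YCell n m, B c' ≠ 0 ∧ c'.1.2 = a' ∧ cb.1.1 < c'.1.1 := by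
  obtain ⟨⟨i0, b⟩, hbm, hib⟩ := cb
  simp only at ha' hia hib ⊢
  by_contra hno
  push_neg at hno
  have ham : a' < m := lt_trans ha' hbm
  set cb : YCell n m := ⟨(i0, b), ⟨hbm, hib⟩⟩ with hcbeq
  set cia : YCell n m := ⟨(i0, a'), ⟨ham, hia⟩⟩ with hciaeq
  have hne : cia ≠ cb := by
    simp only [hciaeq, hcbeq, Ne, Subtype.ext_iff, Prod.ext_iff]
    omega
  have hN1 : 0 < n (m - 1) := lt_of_lt_of_le hn0 (hmono 0 (m-1) (Nat.zero_le _) (by omega))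
  set C : YCell n m →₀ ℕ := mv B cb cia with hC
  have hCδ : uDeg C = δ := by
    rw [hC, uDeg_mv B _ _ hcb]; exact (hsupp B hB).1
  have hw : ∀ iv : ℕ, wPhi n m (iv, a') + (n (m-1)) * (b - a') = wPhi n m (iv, b) := by
    intro iv
    unfold wPhi
    simp only
    have h5 : n (m-1) * b = n (m-1) * a' + n (m-1) * (b - a') := by
      rw [← Nat.mul_add]
      congr 1
      omega
    omega
  have hD1 : 1 ≤ n (m-1) * (b - a') := Nat.mul_pos hN1 (by omega)
  have hφC : uPhi n m C + (n (m-1)) * (b - a') = t := by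
    have h1 : uPhi n m C + wPhi n m (i0, b) = uPhi n m B + wPhi n m (i0, a') :=
      wsum_mv (wPhi n m) B cb cia hcb
    have h2 := hw i0
    have h3 := (hsupp B hB).2
    omega
  have hCM : Mon k C ∈ M := IH C (by omega)
  have hRM : Rop k n m a' b (Mon k C) ∈ M := hR a' b ha' hbm _ hCM
  rw [Rop_mon] at hRM
  set coef : {x // x ∈ Finset.range (n a')} → k := fun i =>
    if h : a' < m ∧ b < m ∧ i.1 < n b then
      ((C ⟨(i.1, a'), ⟨h.1, Finset.mem_range.mp i.2⟩⟩ : ℕ) : k) else 0 with hcoef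
  set tgt : {x // x ∈ Finset.range (n a')} → (YCell n m →₀ ℕ) := fun i =>
    if h : a' < m ∧ b < m ∧ i.1 < n b then
      mv C ⟨(i.1, a'), ⟨h.1, Finset.mem_range.mp i.2⟩⟩
           ⟨(i.1, b), ⟨h.2.1, h.2.2⟩⟩ else 0 with htgt
  have hsum : (∑ i ∈ (Finset.range (n a')).attach, coef i • Mon k (tgt i)) ∈ M := by
    have heq : (∑ i ∈ (Finset.range (n a')).attach, coef i • Mon k (tgt i))
        = ∑ i ∈ (Finset.range (n a')).attach,
          (if h : a' < m ∧ b < m ∧ i.1 < n b then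
            ((C ⟨(i.1, a'), ⟨h.1, Finset.mem_range.mp i.2⟩⟩ : ℕ) : k) •
              Mon k (mv C ⟨(i.1, a'), ⟨h.1, Finset.mem_range.mp i.2⟩⟩
                          ⟨(i.1, b), ⟨h.2.1, h.2.2⟩⟩)
          else 0) := by
      refine Finset.sum_congr rfl fun i _ => ?_
      by_cases h : a' < m ∧ b < m ∧ i.1 < n b
      · simp only [hcoef, htgt, dif_pos h]
      · simp only [hcoef, htgt, dif_neg h, zero_smul]
    rw [heq]
    exact hRM
  have hcond : ∀ i ∈ (Finset.range (n a')).attach,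
      coef i = 0 ∨ (uDeg (tgt i) = δ ∧ uPhi n m (tgt i) = t) := by
    intro i _
    by_cases h : a' < m ∧ b < m ∧ i.1 < n b
    · by_cases h0 : C ⟨(i.1, a'), ⟨h.1, Finset.mem_range.mp i.2⟩⟩ = 0
      · left; simp only [hcoef, dif_pos h, h0, Nat.cast_zero]
      · right
        simp only [htgt, dif_pos h]
        constructor
        · rw [uDeg_mv _ _ _ h0, hCδ]
        · have h1 : uPhi n m (mv C ⟨(i.1, a'), ⟨h.1, Finset.mem_range.mp i.2⟩⟩
                ⟨(i.1, b), ⟨h.2.1, h.2.2⟩⟩) + wPhi n m (i.1, a')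
              = uPhi n m C + wPhi n m (i.1, b) :=
            wsum_mv (wPhi n m) C _ _ h0
          have h2 := hw i.1
          omega
    · left; simp only [hcoef, dif_neg h]
  have hzero := hEQ (Finset.range (n a')).attach coef tgt hcond hsum
  have hmain : ∀ i ∈ (Finset.range (n a')).attach,
      i ≠ (⟨i0, Finset.mem_range.mpr hia⟩ : {x // x ∈ Finset.range (n a')}) →
      coef i * lam (tgt i) = 0 := by
    intro i _ hine
    by_cases h : a' < m ∧ b < m ∧ i.1 < n b
    · have hine' : i.1 ≠ i0 := fun hh => hine (Subtype.ext hh)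
      have hCval : C ⟨(i.1, a'), ⟨h.1, Finset.mem_range.mp i.2⟩⟩
          = B ⟨(i.1, a'), ⟨h.1, Finset.mem_range.mp i.2⟩⟩ := by
        rw [hC]
        refine mv_apply_other B ?_ ?_
        · simp only [hcbeq, Ne, Subtype.ext_iff, Prod.ext_iff]; omega
        · simp only [hciaeq, Ne, Subtype.ext_iff, Prod.ext_iff]; omega
      by_cases h0 : B ⟨(i.1, a'), ⟨h.1, Finset.mem_range.mp i.2⟩⟩ = 0
      · simp only [hcoef, dif_pos h, hCval, h0, Nat.cast_zero, zero_mul]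
      · have hlt : i.1 < i0 := by
          have h5 := hno ⟨(i.1, a'), ⟨h.1, Finset.mem_range.mp i.2⟩⟩ h0 rfl
          simp only at h5
          omega
        have h2 : C ⟨(i.1, a'), ⟨h.1, Finset.mem_range.mp i.2⟩⟩ ≠ 0 := by
          rw [hCval]; exact h0
        have hlam : lam (tgt i) = 0 := by
          by_contra hl
          have hge : uPsi B ≤ uPsi (mv C ⟨(i.1, a'), ⟨h.1, Finset.mem_range.mp i.2⟩⟩
              ⟨(i.1, b), ⟨h.2.1, h.2.2⟩⟩) := by
            have := hmin (tgt i) hl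
            simpa only [htgt, dif_pos h] using this
          have h1 : uPsi C + i0 * b = uPsi B + i0 * a' :=
            wsum_mv (fun p => p.1 * p.2) B cb cia hcb
          have h3 : uPsi (mv C ⟨(i.1, a'), ⟨h.1, Finset.mem_range.mp i.2⟩⟩
                ⟨(i.1, b), ⟨h.2.1, h.2.2⟩⟩) + i.1 * a'
              = uPsi C + i.1 * b :=
            wsum_mv (fun p => p.1 * p.2) C _ _ h2
          have h4 : i.1 * b + i0 * a' < i.1 * a' + i0 * b := by nlinarith
          linarith
        rw [hlam, mul_zero]
    · simp only [hcoef, dif_neg h, zero_mul]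
  rw [Finset.sum_eq_single_of_mem (⟨i0, Finset.mem_range.mpr hia⟩ :
      {x // x ∈ Finset.range (n a')}) (Finset.mem_attach _ _) hmain] at hzero
  have hc2 : a' < m ∧ b < m ∧ i0 < n b := ⟨ham, hbm, hib⟩
  have hzero2 : ((C cia : ℕ) : k) * lam (mv C cia cb) = 0 := by
    simpa only [hcoef, htgt, dif_pos hc2] using hzero
  have hCcb : C cia = B cia + 1 := by
    rw [hC]; exact mv_apply_tgt B hne
  have htgtval : mv C cia cb = B := by
    rw [hC]; exact mv_mv_cancel B hcb hne
  rw [hCcb, htgtval] at hzero2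
  have hlamB : lam B = 0 := by
    rcases mul_eq_zero.mp hzero2 with h | h
    · exact absurd h (Nat.cast_ne_zero.mpr (Nat.succ_ne_zero (B cia)))
    · exact h
  exact hB hlamB


end

section
variable {m : ℕ} {n : ℕ → ℕ} {l : List (ℕ × ℕ)}

lemma SUPPORT (hE : IsExec n m l) (B : YCell n m →₀ ℕ)
    (hFL : ∀ (ca : YCell n m), B ca ≠ 0 → ∀ b, ca.1.1 < b → b < n ca.1.2 →
        ∃ cb : YCell n m, B cb ≠ 0 ∧ cb.1.1 = b ∧ cb.1.2 < ca.1.2)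
    (hFR : ∀ (cb : YCell n m), B cb ≠ 0 → ∀ a', a' < cb.1.2 → cb.1.1 < n a' →
        ∃ c' : YCell n m, B c' ≠ 0 ∧ c'.1.2 = a' ∧ cb.1.1 < c'.1.1) :
    ∀ (c : YCell n m), B c ≠ 0 → c.1 ∈ l := by
  have main : ∀ jj (c : YCell n m), c.1.2 = jj → B c ≠ 0 → c.1 ∈ l := by
    intro jj
    induction jj using Nat.strong_induction_on with
    | _ jj IHj =>
      intro c hcol hc
      obtain ⟨⟨a, j⟩, hjm, han⟩ := c
      simp only at hcol han ⊢
      subst hcol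
      -- no earlier-column corner in row a
      have hrow : ∀ j'', j'' < j → (a, j'') ∉ l := by
        intro j'' hj'' hmem
        have hY := exec_mem_Y hE hmem
        simp only at hY
        obtain ⟨c', hc', hcol', hgt⟩ :=
          hFR ⟨(a, j), ⟨hjm, han⟩⟩ hc j'' hj'' hY.2
        simp only at hcol' hgt
        have hcl : c'.1 ∈ l := IHj j'' hj'' c' hcol' hc'
        have heq := exec_col_inj hE hmem hcl (by simp [hcol'])
        rw [← heq] at hgt
        simp at hgt
      -- column j has a corner
      have hcorner : ∃ it, (it, j) ∈ l := by
        by_contra hnone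
        push_neg at hnone
        obtain ⟨c', hc', h1, h2⟩ := exec_dead hE hjm hnone han
        apply hrow c'.2 h2
        have : (a, c'.2) = c' := by rw [← h1]
        rwa [this]
      obtain ⟨it, hit⟩ := hcorner
      rcases lt_trichotomy it a with h | h | h
      · exfalso
        obtain ⟨c'', hc'', h1, h2⟩ :=
          exec_below hE hit (show (it, j).1 < a from h) (show a < n (it, j).2 from han)
        simp only at h1 h2
        apply hrow c''.2 h2
        have : (a, c''.2) = c'' := by rw [← h1]
        rwa [this]
      · subst h
        exact hit
      · exfalso
        have hitn : it < n j := (exec_mem_Y hE hit).2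
        obtain ⟨cb, hcb, hrowb, hcolb⟩ := hFL ⟨(a, j), ⟨hjm, han⟩⟩ hc it h hitn
        simp only at hrowb hcolb
        have hcbl : cb.1 ∈ l := IHj cb.1.2 hcolb cb rfl hcb
        have heq := exec_row_inj hE hit hcbl (by simp [hrowb])
        rw [← heq] at hcolb
        simp at hcolb
  exact fun c hc => main c.1.2 c rfl hc


end

section
variable {k : Type*} [Field k] [CharZero k] {m : ℕ} {n : ℕ → ℕ} {l : List (ℕ × ℕ)}
variable {M : Submodule k (MvPolynomial (YCell n m) k)}
variable {t δ : ℕ} {lam : (YCell n m →₀ ℕ) → k}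

lemma VALUES (hm : 0 < m) (hn0 : 0 < n 0)
    (hmono : ∀ j j', j ≤ j' → j' < m → n j ≤ n j')
    (hE : IsExec n m l)
    (hL : ∀ a b : ℕ, a < b → b < n (m - 1) → ∀ p ∈ M, Lop k n m a b p ∈ M)
    (hR : ∀ a b : ℕ, a < b → b < m → ∀ p ∈ M, Rop k n m a b p ∈ M)
    (IH : ∀ u : YCell n m →₀ ℕ, uPhi n m u < t → Mon k u ∈ M)
    (hsupp : ∀ u, lam u ≠ 0 → uDeg u = δ ∧ uPhi n m u = t)
    (hEQ : ∀ {ι : Type} (s : Finset ι) (coef : ι → k) (tgt : ι → (YCell n m →₀ ℕ)),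
        (∀ i ∈ s, coef i = 0 ∨ (uDeg (tgt i) = δ ∧ uPhi n m (tgt i) = t)) →
        (∑ i ∈ s, coef i • Mon k (tgt i)) ∈ M →
        (∑ i ∈ s, coef i * lam (tgt i)) = 0)
    (B : YCell n m →₀ ℕ) (hB : lam B ≠ 0)
    (hsup : ∀ c : YCell n m, B c ≠ 0 → c.1 ∈ l) :
    ∀ (c c' : YCell n m), c.1 ∈ l → c'.1 ∈ l → c.1.1 ≤ c'.1.1 → c'.1.2 ≤ c.1.2 →
      B c ≤ B c' := by
  intro c c' hcl hc'l hrr hcc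
  by_cases hc0 : B c = 0
  · omega
  by_cases hre : c.1.1 = c'.1.1
  · have h1 := exec_row_inj hE hcl hc'l hre
    have h2 : c = c' := Subtype.ext h1
    rw [h2]
  by_cases hce : c.1.2 = c'.1.2
  · have h1 := exec_col_inj hE hcl hc'l hce
    have h2 : c = c' := Subtype.ext h1
    rw [h2]
  obtain ⟨⟨ρ, j⟩, hjm, hρn⟩ := c
  obtain ⟨⟨ρ', j'⟩, hj'm, hρ'n⟩ := c'
  simp only at hrr hcc hre hce hcl hc'l hc0 hjm hj'm ⊢
  have hr : ρ < ρ' := by omega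
  have hc2 : j' < j := by omega
  set cc : YCell n m := ⟨(ρ, j), ⟨hjm, hρn⟩⟩ with hcceq
  set cc' : YCell n m := ⟨(ρ', j'), ⟨hj'm, hρ'n⟩⟩ with hcc'eq
  have hρnj' : ρ < n j' := lt_trans hr hρ'n
  have hρ'nj : ρ' < n j := lt_of_lt_of_le hρ'n (hmono j' j (le_of_lt hc2) hjm)
  set p₁ : YCell n m := ⟨(ρ, j'), ⟨hj'm, hρnj'⟩⟩ with hp₁eq
  set p₂ : YCell n m := ⟨(ρ', j), ⟨hjm, hρ'nj⟩⟩ with hp₂eq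
  have hp₁c : p₁ ≠ cc := by
    simp only [hp₁eq, hcceq, Ne, Subtype.ext_iff, Prod.ext_iff]; omega
  have hp₂c : p₂ ≠ cc := by
    simp only [hp₂eq, hcceq, Ne, Subtype.ext_iff, Prod.ext_iff]; omega
  have hp₂c' : p₂ ≠ cc' := by
    simp only [hp₂eq, hcc'eq, Ne, Subtype.ext_iff, Prod.ext_iff]; omega
  have hp₁c' : p₁ ≠ cc' := by
    simp only [hp₁eq, hcc'eq, Ne, Subtype.ext_iff, Prod.ext_iff]; omega
  have hccc' : cc ≠ cc' := by
    simp only [hcceq, hcc'eq, Ne, Subtype.ext_iff, Prod.ext_iff]; omega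
  have hp₁p₂ : p₁ ≠ p₂ := by
    simp only [hp₁eq, hp₂eq, Ne, Subtype.ext_iff, Prod.ext_iff]; omega
  have hBp₁ : B p₁ = 0 := by
    by_contra hne0
    have hmem := hsup p₁ hne0
    have h1 := exec_row_inj hE hmem hcl rfl
    simp only [hp₁eq] at h1
    have h2 := (Prod.ext_iff.mp h1).2
    simp only at h2
    omega
  have hBp₂ : B p₂ = 0 := by
    by_contra hne0
    have hmem := hsup p₂ hne0
    have h1 := exec_col_inj hE hmem hcl rfl
    simp only [hp₂eq] at h1
    have h2 := (Prod.ext_iff.mp h1).1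
    simp only at h2
    omega
  have hrowq₂ : ∀ cx : YCell n m, cx.1.1 = ρ' → cx ≠ cc' → B cx = 0 := by
    intro cx hrow hnecc'
    by_contra hne0
    have hmem := hsup cx hne0
    have h1 := exec_row_inj hE hmem hc'l (by rw [hrow])
    exact hnecc' (Subtype.ext h1)
  have hcolq₂ : ∀ cx : YCell n m, cx.1.2 = j' → cx ≠ cc' → B cx = 0 := by
    intro cx hcol hnecc'
    by_contra hne0
    have hmem := hsup cx hne0
    have h1 := exec_col_inj hE hmem hc'l (by rw [hcol])
    exact hnecc' (Subtype.ext h1)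
  set B₀ : ℕ := B cc with hB₀
  set B₁ : ℕ := B cc' with hB₁
  show B₀ ≤ B₁
  by_contra hltc
  have hlt : B₁ < B₀ := by omega
  set us : ℕ → (YCell n m →₀ ℕ) :=
    fun s => Nat.rec B (fun _ prev => mv (mv prev cc p₁) cc' p₂) s with hus
  have husS : ∀ s, us (s + 1) = mv (mv (us s) cc p₁) cc' p₂ := fun s => rfl
  have hN1 : 0 < n (m - 1) := lt_of_lt_of_le hn0 (hmono 0 (m-1) (Nat.zero_le _) (by omega))
  have hwv : ∀ iv : ℕ, wPhi n m (iv, j') + (n (m-1)) * (j - j') = wPhi n m (iv, j) := by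
    intro iv
    unfold wPhi
    simp only
    have h5 : n (m-1) * j = n (m-1) * j' + n (m-1) * (j - j') := by
      rw [← Nat.mul_add]
      congr 1
      omega
    omega
  have hD1 : 1 ≤ n (m-1) * (j - j') := Nat.mul_pos hN1 (by omega)
  have chain : ∀ s, s ≤ B₁ →
      lam (us s) ≠ 0 ∧ (us s) cc = B₀ - s ∧ (us s) cc' = B₁ - s ∧
      (us s) p₁ = s ∧ (us s) p₂ = s ∧
      (∀ x, x ≠ cc → x ≠ cc' → x ≠ p₁ → x ≠ p₂ → (us s) x = B x) := by
    intro s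
    induction s with
    | zero =>
      intro _
      exact ⟨hB, by show B cc = B₀ - 0; omega, by show B cc' = B₁ - 0; omega,
        hBp₁, hBp₂, fun x _ _ _ _ => rfl⟩
    | succ s IHs =>
      intro hs1
      obtain ⟨hlam, hvc, hvc', hvp₁, hvp₂, hother⟩ := IHs (by omega)
      have hsB₀ : s < B₀ := by omega
      have hsB₁ : s < B₁ := by omega
      have hCc : (us s) cc ≠ 0 := by rw [hvc]; omega
      set C : YCell n m →₀ ℕ := mv (us s) cc p₁ with hCdef
      have hCcc : C cc = B₀ - (s+1) := by
        rw [hCdef, mv_apply_src (us s) hp₁c, hvc]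
        omega
      have hCp₁ : C p₁ = s + 1 := by
        rw [hCdef, mv_apply_tgt (us s) hp₁c, hvp₁]
      have hCcc' : C cc' = B₁ - s := by
        rw [hCdef, mv_apply_other (us s) (Ne.symm hccc') (Ne.symm hp₁c'), hvc']
      have hCp₂ : C p₂ = s := by
        rw [hCdef, mv_apply_other (us s) hp₂c (Ne.symm hp₁p₂), hvp₂]
      have hδs := (hsupp (us s) hlam).1
      have hφs := (hsupp (us s) hlam).2
      have hCδ : uDeg C = δ := by rw [hCdef, uDeg_mv _ _ _ hCc]; exact hδs
      have hφC : uPhi n m C + (n (m-1)) * (j - j') = t := by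
        have h1 : uPhi n m C + wPhi n m (ρ, j) = uPhi n m (us s) + wPhi n m (ρ, j') :=
          wsum_mv (wPhi n m) (us s) cc p₁ hCc
        have h2 := hwv ρ
        omega
      have hCM : Mon k C ∈ M := IH C (by omega)
      have hRM : Rop k n m j' j (Mon k C) ∈ M := hR j' j hc2 hjm _ hCM
      rw [Rop_mon] at hRM
      set coef : {x // x ∈ Finset.range (n j')} → k := fun i =>
        if h : j' < m ∧ j < m ∧ i.1 < n j then
          ((C ⟨(i.1, j'), ⟨h.1, Finset.mem_range.mp i.2⟩⟩ : ℕ) : k) else 0 with hcoef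
      set tgt : {x // x ∈ Finset.range (n j')} → (YCell n m →₀ ℕ) := fun i =>
        if h : j' < m ∧ j < m ∧ i.1 < n j then
          mv C ⟨(i.1, j'), ⟨h.1, Finset.mem_range.mp i.2⟩⟩
               ⟨(i.1, j), ⟨h.2.1, h.2.2⟩⟩ else 0 with htgt
      have hsum : (∑ i ∈ (Finset.range (n j')).attach, coef i • Mon k (tgt i)) ∈ M := by
        have heq : (∑ i ∈ (Finset.range (n j')).attach, coef i • Mon k (tgt i))
            = ∑ i ∈ (Finset.range (n j')).attach,
              (if h : j' < m ∧ j < m ∧ i.1 < n j then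
                ((C ⟨(i.1, j'), ⟨h.1, Finset.mem_range.mp i.2⟩⟩ : ℕ) : k) •
                  Mon k (mv C ⟨(i.1, j'), ⟨h.1, Finset.mem_range.mp i.2⟩⟩
                              ⟨(i.1, j), ⟨h.2.1, h.2.2⟩⟩)
              else 0) := by
          refine Finset.sum_congr rfl fun i _ => ?_
          by_cases h : j' < m ∧ j < m ∧ i.1 < n j
          · simp only [hcoef, htgt, dif_pos h]
          · simp only [hcoef, htgt, dif_neg h, zero_smul]
        rw [heq]
        exact hRM
      have hcond : ∀ i ∈ (Finset.range (n j')).attach,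
          coef i = 0 ∨ (uDeg (tgt i) = δ ∧ uPhi n m (tgt i) = t) := by
        intro i _
        by_cases h : j' < m ∧ j < m ∧ i.1 < n j
        · by_cases h0 : C ⟨(i.1, j'), ⟨h.1, Finset.mem_range.mp i.2⟩⟩ = 0
          · left; simp only [hcoef, dif_pos h, h0, Nat.cast_zero]
          · right
            simp only [htgt, dif_pos h]
            constructor
            · rw [uDeg_mv _ _ _ h0, hCδ]
            · have h1 : uPhi n m (mv C ⟨(i.1, j'), ⟨h.1, Finset.mem_range.mp i.2⟩⟩
                    ⟨(i.1, j), ⟨h.2.1, h.2.2⟩⟩) + wPhi n m (i.1, j')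
                  = uPhi n m C + wPhi n m (i.1, j) :=
                wsum_mv (wPhi n m) C _ _ h0
              have h2 := hwv i.1
              omega
        · left; simp only [hcoef, dif_neg h]
      have hzero := hEQ (Finset.range (n j')).attach coef tgt hcond hsum
      have hne12 : (⟨ρ, Finset.mem_range.mpr hρnj'⟩ : {x // x ∈ Finset.range (n j')})
          ≠ ⟨ρ', Finset.mem_range.mpr hρ'n⟩ := by
        intro hh
        have := congrArg Subtype.val hh
        simp only at this
        omega
      have hothers : ∀ i ∈ (Finset.range (n j')).attach,
          i ≠ (⟨ρ, Finset.mem_range.mpr hρnj'⟩ : {x // x ∈ Finset.range (n j')}) ∧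
          i ≠ ⟨ρ', Finset.mem_range.mpr hρ'n⟩ →
          coef i * lam (tgt i) = 0 := by
        intro i _ hnes
        by_cases h : j' < m ∧ j < m ∧ i.1 < n j
        · have hi1 : i.1 ≠ ρ := fun hh => hnes.1 (Subtype.ext hh)
          have hi2 : i.1 ≠ ρ' := fun hh => hnes.2 (Subtype.ext hh)
          have hx1 : C ⟨(i.1, j'), ⟨h.1, Finset.mem_range.mp i.2⟩⟩
              = (us s) ⟨(i.1, j'), ⟨h.1, Finset.mem_range.mp i.2⟩⟩ := by
            rw [hCdef]
            refine mv_apply_other (us s) ?_ ?_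
            · simp only [hcceq, Ne, Subtype.ext_iff, Prod.ext_iff]; omega
            · simp only [hp₁eq, Ne, Subtype.ext_iff, Prod.ext_iff]; omega
          have hx2 : (us s) ⟨(i.1, j'), ⟨h.1, Finset.mem_range.mp i.2⟩⟩
              = B ⟨(i.1, j'), ⟨h.1, Finset.mem_range.mp i.2⟩⟩ := by
            refine hother _ ?_ ?_ ?_ ?_ <;>
              (simp only [hcceq, hcc'eq, hp₁eq, hp₂eq, Ne, Subtype.ext_iff, Prod.ext_iff]; omega)
          have hx3 : B ⟨(i.1, j'), ⟨h.1, Finset.mem_range.mp i.2⟩⟩ = 0 := by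
            refine hcolq₂ _ rfl ?_
            simp only [hcc'eq, Ne, Subtype.ext_iff, Prod.ext_iff]; omega
          simp only [hcoef, dif_pos h, hx1, hx2, hx3, Nat.cast_zero, zero_mul]
        · simp only [hcoef, dif_neg h, zero_mul]
      rw [Finset.sum_eq_add_of_mem _ _ (Finset.mem_attach _ _) (Finset.mem_attach _ _)
          hne12 hothers] at hzero
      have hcd1 : j' < m ∧ j < m ∧ ρ < n j := ⟨hj'm, hjm, hρn⟩
      have hcd2 : j' < m ∧ j < m ∧ ρ' < n j := ⟨hj'm, hjm, hρ'nj⟩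
      have hz2 : ((C p₁ : ℕ) : k) * lam (mv C p₁ cc)
          + ((C cc' : ℕ) : k) * lam (mv C cc' p₂) = 0 := by
        simpa only [hcoef, htgt, dif_pos hcd1, dif_pos hcd2] using hzero
      have hmvcancel : mv C p₁ cc = us s := by
        rw [hCdef]; exact mv_mv_cancel (us s) hCc hp₁c
      rw [hmvcancel, hCp₁, hCcc'] at hz2
      have hnext : lam (us (s+1)) ≠ 0 := by
        rw [husS s, ← hCdef]
        intro h0
        rw [h0, mul_zero, add_zero] at hz2
        rcases mul_eq_zero.mp hz2 with h | h
        · exact absurd h (Nat.cast_ne_zero.mpr (Nat.succ_ne_zero s))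
        · exact hlam h
      refine ⟨hnext, ?_, ?_, ?_, ?_, ?_⟩
      · rw [husS s, ← hCdef, mv_apply_other C hccc' (Ne.symm hp₂c), hCcc]
      · rw [husS s, ← hCdef, mv_apply_src C hp₂c', hCcc']
        omega
      · rw [husS s, ← hCdef, mv_apply_other C hp₁c' hp₁p₂, hCp₁]
      · rw [husS s, ← hCdef, mv_apply_tgt C hp₂c', hCp₂]
      · intro x hx1 hx2 hx3 hx4
        rw [husS s, ← hCdef, mv_apply_other C hx2 hx4, hCdef,
            mv_apply_other (us s) hx1 hx3]
        exact hother x hx1 hx2 hx3 hx4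
  -- final clean equation at s = B₁
  obtain ⟨hlamB₁, hvc, hvc', hvp₁, hvp₂, hother⟩ := chain B₁ le_rfl
  have hCc : (us B₁) cc ≠ 0 := by rw [hvc]; omega
  set C : YCell n m →₀ ℕ := mv (us B₁) cc p₂ with hCdef
  have hδs := (hsupp (us B₁) hlamB₁).1
  have hφs := (hsupp (us B₁) hlamB₁).2
  have hCδ : uDeg C = δ := by rw [hCdef, uDeg_mv _ _ _ hCc]; exact hδs
  have hbN : ρ' < n (m-1) := lt_of_lt_of_le hρ'n (hmono j' (m-1) (by omega) (by omega))
  have hw2 : ∀ jv : ℕ, wPhi n m (ρ', jv) + (ρ' - ρ) = wPhi n m (ρ, jv) := by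
    intro jv; unfold wPhi; simp only; omega
  have hφC : uPhi n m C + (ρ' - ρ) = t := by
    have h1 : uPhi n m C + wPhi n m (ρ, j) = uPhi n m (us B₁) + wPhi n m (ρ', j) :=
      wsum_mv (wPhi n m) (us B₁) cc p₂ hCc
    have h2 := hw2 j
    omega
  have hCM : Mon k C ∈ M := IH C (by omega)
  have hLM : Lop k n m ρ ρ' (Mon k C) ∈ M := hL ρ ρ' hr hbN _ hCM
  rw [Lop_mon] at hLM
  set coef : {x // x ∈ Finset.range m} → k := fun jx =>
    if h : ρ < n jx.1 ∧ ρ' < n jx.1 then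
      ((C ⟨(ρ', jx.1), ⟨Finset.mem_range.mp jx.2, h.2⟩⟩ : ℕ) : k) else 0 with hcoef
  set tgt : {x // x ∈ Finset.range m} → (YCell n m →₀ ℕ) := fun jx =>
    if h : ρ < n jx.1 ∧ ρ' < n jx.1 then
      mv C ⟨(ρ', jx.1), ⟨Finset.mem_range.mp jx.2, h.2⟩⟩
           ⟨(ρ, jx.1), ⟨Finset.mem_range.mp jx.2, h.1⟩⟩ else 0 with htgt
  have hsum : (∑ jx ∈ (Finset.range m).attach, coef jx • Mon k (tgt jx)) ∈ M := by
    have heq : (∑ jx ∈ (Finset.range m).attach, coef jx • Mon k (tgt jx))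
        = ∑ jx ∈ (Finset.range m).attach,
          (if h : ρ < n jx.1 ∧ ρ' < n jx.1 then
            ((C ⟨(ρ', jx.1), ⟨Finset.mem_range.mp jx.2, h.2⟩⟩ : ℕ) : k) •
              Mon k (mv C ⟨(ρ', jx.1), ⟨Finset.mem_range.mp jx.2, h.2⟩⟩
                          ⟨(ρ, jx.1), ⟨Finset.mem_range.mp jx.2, h.1⟩⟩)
          else 0) := by
      refine Finset.sum_congr rfl fun jx _ => ?_
      by_cases h : ρ < n jx.1 ∧ ρ' < n jx.1
      · simp only [hcoef, htgt, dif_pos h]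
      · simp only [hcoef, htgt, dif_neg h, zero_smul]
    rw [heq]
    exact hLM
  have hw3 : ∀ jv : ℕ, ρ' < n jv → wPhi n m (ρ', jv) + (ρ' - ρ) = wPhi n m (ρ, jv) := by
    intro jv _; exact hw2 jv
  have hcond : ∀ jx ∈ (Finset.range m).attach,
      coef jx = 0 ∨ (uDeg (tgt jx) = δ ∧ uPhi n m (tgt jx) = t) := by
    intro jx _
    by_cases h : ρ < n jx.1 ∧ ρ' < n jx.1
    · by_cases h0 : C ⟨(ρ', jx.1), ⟨Finset.mem_range.mp jx.2, h.2⟩⟩ = 0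
      · left; simp only [hcoef, dif_pos h, h0, Nat.cast_zero]
      · right
        simp only [htgt, dif_pos h]
        constructor
        · rw [uDeg_mv _ _ _ h0, hCδ]
        · have h1 : uPhi n m (mv C ⟨(ρ', jx.1), ⟨Finset.mem_range.mp jx.2, h.2⟩⟩
                ⟨(ρ, jx.1), ⟨Finset.mem_range.mp jx.2, h.1⟩⟩) + wPhi n m (ρ', jx.1)
              = uPhi n m C + wPhi n m (ρ, jx.1) :=
            wsum_mv (wPhi n m) C _ _ h0
          have h2 := hw2 jx.1
          omega
    · left; simp only [hcoef, dif_neg h]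
  have hzero := hEQ (Finset.range m).attach coef tgt hcond hsum
  have hmain : ∀ jx ∈ (Finset.range m).attach,
      jx ≠ (⟨j, Finset.mem_range.mpr hjm⟩ : {x // x ∈ Finset.range m}) →
      coef jx * lam (tgt jx) = 0 := by
    intro jx _ hjne
    by_cases h : ρ < n jx.1 ∧ ρ' < n jx.1
    · have hjne' : jx.1 ≠ j := fun hh => hjne (Subtype.ext hh)
      have hx1 : C ⟨(ρ', jx.1), ⟨Finset.mem_range.mp jx.2, h.2⟩⟩
          = (us B₁) ⟨(ρ', jx.1), ⟨Finset.mem_range.mp jx.2, h.2⟩⟩ := by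
        rw [hCdef]
        refine mv_apply_other (us B₁) ?_ ?_
        · simp only [hcceq, Ne, Subtype.ext_iff, Prod.ext_iff]; omega
        · simp only [hp₂eq, Ne, Subtype.ext_iff, Prod.ext_iff]; omega
      by_cases hxc' : (⟨(ρ', jx.1), ⟨Finset.mem_range.mp jx.2, h.2⟩⟩ : YCell n m) = cc'
      · have hz : (us B₁) ⟨(ρ', jx.1), ⟨Finset.mem_range.mp jx.2, h.2⟩⟩ = 0 := by
          rw [hxc', hvc']
          omega
        simp only [hcoef, dif_pos h, hx1, hz, Nat.cast_zero, zero_mul]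
      · have hx2 : (us B₁) ⟨(ρ', jx.1), ⟨Finset.mem_range.mp jx.2, h.2⟩⟩
            = B ⟨(ρ', jx.1), ⟨Finset.mem_range.mp jx.2, h.2⟩⟩ := by
          refine hother _ ?_ hxc' ?_ ?_
          · simp only [hcceq, Ne, Subtype.ext_iff, Prod.ext_iff]; omega
          · simp only [hp₁eq, Ne, Subtype.ext_iff, Prod.ext_iff]; omega
          · simp only [hp₂eq, Ne, Subtype.ext_iff, Prod.ext_iff]; omega
        have hx3 : B ⟨(ρ', jx.1), ⟨Finset.mem_range.mp jx.2, h.2⟩⟩ = 0 :=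
          hrowq₂ _ rfl hxc'
        simp only [hcoef, dif_pos h, hx1, hx2, hx3, Nat.cast_zero, zero_mul]
    · simp only [hcoef, dif_neg h, zero_mul]
  rw [Finset.sum_eq_single_of_mem (⟨j, Finset.mem_range.mpr hjm⟩ :
      {x // x ∈ Finset.range m}) (Finset.mem_attach _ _) hmain] at hzero
  have hcd : ρ < n j ∧ ρ' < n j := ⟨hρn, hρ'nj⟩
  have hz2 : ((C p₂ : ℕ) : k) * lam (mv C p₂ cc) = 0 := by
    simpa only [hcoef, htgt, dif_pos hcd] using hzero
  have hCp₂v : C p₂ = B₁ + 1 := by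
    rw [hCdef, mv_apply_tgt (us B₁) hp₂c, hvp₂]
  have hcan : mv C p₂ cc = us B₁ := by
    rw [hCdef]; exact mv_mv_cancel (us B₁) hCc hp₂c
  rw [hCp₂v, hcan] at hz2
  rcases mul_eq_zero.mp hz2 with h | h
  · exact absurd h (Nat.cast_ne_zero.mpr (Nat.succ_ne_zero B₁))
  · exact hlamB₁ h


end

section
variable {k : Type*} [Field k] [CharZero k] {m : ℕ} {n : ℕ → ℕ}
variable {M : Submodule k (MvPolynomial (YCell n m) k)}
variable {t δ : ℕ} {lam : (YCell n m →₀ ℕ) → k}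

lemma core (hm : 0 < m) (hn0 : 0 < n 0)
    (hmono : ∀ j j', j ≤ j' → j' < m → n j ≤ n j')
    (l : List (ℕ × ℕ)) (hE : IsExec n m l)
    (hgen : ∀ A : ℕ × ℕ → ℕ, DLDense {c | c ∈ l} A → monArr k n m A ∈ M)
    (hL : ∀ a b : ℕ, a < b → b < n (m - 1) → ∀ p ∈ M, Lop k n m a b p ∈ M)
    (hR : ∀ a b : ℕ, a < b → b < m → ∀ p ∈ M, Rop k n m a b p ∈ M)
    (IH : ∀ u : YCell n m →₀ ℕ, uPhi n m u < t → Mon k u ∈ M)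
    (hsupp : ∀ u, lam u ≠ 0 → uDeg u = δ ∧ uPhi n m u = t)
    (hM0 : ∀ u, uDeg u = δ → uPhi n m u = t → Mon k u ∈ M → lam u = 0)
    (hEQ : ∀ {ι : Type} (s : Finset ι) (coef : ι → k) (tgt : ι → (YCell n m →₀ ℕ)),
        (∀ i ∈ s, coef i = 0 ∨ (uDeg (tgt i) = δ ∧ uPhi n m (tgt i) = t)) →
        (∑ i ∈ s, coef i • Mon k (tgt i)) ∈ M →
        (∑ i ∈ s, coef i * lam (tgt i)) = 0)
    (u₀ : YCell n m →₀ ℕ) (hu₀ : lam u₀ ≠ 0) : False := by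
  classical
  obtain ⟨B, hB, hBeq⟩ :=
    Nat.sInf_mem (s := {x | ∃ u, lam u ≠ 0 ∧ uPsi u = x}) ⟨uPsi u₀, u₀, hu₀, rfl⟩
  have hmin : ∀ u, lam u ≠ 0 → uPsi B ≤ uPsi u := fun u hu =>
    hBeq ▸ Nat.sInf_le ⟨u, hu, rfl⟩
  have hFL' : ∀ (ca : YCell n m), B ca ≠ 0 → ∀ b, ca.1.1 < b → b < n ca.1.2 →
      ∃ cb : YCell n m, B cb ≠ 0 ∧ cb.1.1 = b ∧ cb.1.2 < ca.1.2 :=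
    fun ca hca b hab hbn => FL hmono hL IH hsupp hEQ B hB hmin ca hca b hab hbn
  have hFR' : ∀ (cb : YCell n m), B cb ≠ 0 → ∀ a', a' < cb.1.2 → cb.1.1 < n a' →
      ∃ c' : YCell n m, B c' ≠ 0 ∧ c'.1.2 = a' ∧ cb.1.1 < c'.1.1 :=
    fun cb hcb a' ha' hia => FR hm hn0 hmono hR IH hsupp hEQ B hB hmin cb hcb a' ha' hia
  have hsup : ∀ (c : YCell n m), B c ≠ 0 → c.1 ∈ l := SUPPORT hE B hFL' hFR'
  have hval := VALUES hm hn0 hmono hE hL hR IH hsupp hEQ B hB hsup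
  set A : ℕ × ℕ → ℕ := fun c =>
    if h : c.2 < m ∧ c.1 < n c.2 then B ⟨c, h⟩ else 0 with hAdef
  have hDL : DLDense {c | c ∈ l} A := by
    constructor
    · intro c hcS
      by_cases h : c.2 < m ∧ c.1 < n c.2
      · simp only [hAdef, dif_pos h]
        by_contra hne0
        exact hcS (hsup ⟨c, h⟩ hne0)
      · simp only [hAdef, dif_neg h]
    · intro c c' hcS hc'S hle
      have hYc := exec_mem_Y hE hcS
      have hYc' := exec_mem_Y hE hc'S
      simp only [hAdef, dif_pos hYc, dif_pos hYc']
      exact hval ⟨c, hYc⟩ ⟨c', hYc'⟩ hcS hc'S hle.1 hle.2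
  have hMon : monArr k n m A = Mon k B := by
    refine monArr_eq B A fun i j h1 h2 => ?_
    simp only [hAdef]
    rw [dif_pos (⟨h1, h2⟩ : (i, j).2 < m ∧ (i, j).1 < n (i, j).2)]
  have hmem : Mon k B ∈ M := hMon ▸ hgen A hDL
  exact hB (hM0 B (hsupp B hB).1 (hsupp B hB).2 hmem)


end

end DLAux

/-- Proposition 4.4.  The monomials `v^A`, `A` a DL-dense array,
generate `k[v]` as a bi-module over the two Borel subalgebras: the smallest
`k`-subspace containing them and invariant under all operators `L_{ab}`
(`a < b ≤ n_m`) and `R_{ab}` (`a < b ≤ m`) is the whole polynomial ring. -/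
theorem dl_dense_monomials_generate (k : Type*) [Field k] [CharZero k]
    (m : ℕ) (hm : 0 < m) (n : ℕ → ℕ) (hn0 : 0 < n 0)
    (hmono : ∀ j j', j ≤ j' → j' < m → n j ≤ n j')
    (S : Set (ℕ × ℕ)) (hS : IsScSet n m S)
    (M : Submodule k (MvPolynomial (YCell n m) k))
    (hgen : ∀ A : ℕ × ℕ → ℕ, DLDense S A → monArr k n m A ∈ M)
    (hL : ∀ a b : ℕ, a < b → b < n (m - 1) → ∀ p ∈ M, Lop k n m a b p ∈ M)
    (hR : ∀ a b : ℕ, a < b → b < m → ∀ p ∈ M, Rop k n m a b p ∈ M) :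
    M = ⊤ := by
  classical
  obtain ⟨l, hE, rfl⟩ := hS
  have key : ∀ (T : ℕ) (u : YCell n m →₀ ℕ), DLAux.uPhi n m u = T → DLAux.Mon k u ∈ M := by
    intro T
    induction T using Nat.strong_induction_on with
    | _ T IHT =>
      intro u hu
      by_contra h₀
      obtain ⟨lam, hsupp, hlamu, hEQ⟩ :=
        DLAux.exists_lam M T (DLAux.uDeg u) u rfl hu h₀
      have hM0 : ∀ v, DLAux.uDeg v = DLAux.uDeg u → DLAux.uPhi n m v = T →
          DLAux.Mon k v ∈ M → lam v = 0 := by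
        intro v h1 h2 hv
        have h3 := hEQ ({()} : Finset Unit) (fun _ => (1 : k)) (fun _ => v)
          (fun _ _ => Or.inr ⟨h1, h2⟩)
          (by rw [Finset.sum_singleton, one_smul]; exact hv)
        rw [Finset.sum_singleton, one_mul] at h3
        exact h3
      exact DLAux.core hm hn0 hmono l hE hgen hL hR
        (fun v hv => IHT _ hv v rfl) hsupp hM0 hEQ u hlamu
  rw [eq_top_iff]
  intro p _
  rw [MvPolynomial.as_sum p]
  refine Submodule.sum_mem _ fun v hv => ?_
  have h1 : MvPolynomial.monomial v (MvPolynomial.coeff v p)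
      = (MvPolynomial.coeff v p) • DLAux.Mon k v := by
    rw [DLAux.Mon, MvPolynomial.smul_monomial, smul_eq_mul, mul_one]
  rw [h1]
  exact Submodule.smul_mem _ _ (key _ v rfl)
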